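/- Let N be a finite nonempty set and fix i ∈ N. For each i' ∈ N let γ_{i'} : 2^N → ℝ be such that γ_{i'}(C) ≥ 0 for every C ⊊ N with i' ∈ C, and such that Σ_{i'∈N} γ_{i'}(C) = 0 for every C ⊊ N. Then for all functions a, â : 2^N → ℝ satisfying â(N) = a(N), â(C) = a(C) for every C ⊆ N with i ∉ C, and a(C) ≥ â(C) for every C ⊊ N with i ∈ C, the following hold: Σ_{C ⊆ N} γ_i(C)·â(C) ≤ Σ_{C ⊆ N} γ_i(C)·a(C), and Σ_{C ⊆ N} (Σ_{i'∈N, i'≠i} γ_{i'}(C))·â(C) ≥ Σ_{C ⊆ N} (Σ_{i'∈N, i'≠i} γ_{i'}(C))·a(C). -/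

import Mathlib

open Finset

/-- Sufficiency direction of Theorem 4.4 (Characterization 2), stated
algebraically over coalitions `C ⊆ N`: any linear, efficient metric of the
coalition form with nonnegative coefficients on proper coalitions containing
client `i` is Bayesian incentive compatible. -/
theorem characterization2_sufficiency {ι : Type*} [Fintype ι] [DecidableEq ι] [Nonempty ι]
    (i : ι) (γ : ι → Finset ι → ℝ)
    (hpos : ∀ i' : ι, ∀ C : Finset ι, C ⊂ Finset.univ → i' ∈ C → 0 ≤ γ i' C)
    (hsum : ∀ C : Finset ι, C ⊂ Finset.univ → ∑ i' : ι, γ i' C = 0)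
    (a ah : Finset ι → ℝ)
    (hfull : ah Finset.univ = a Finset.univ)
    (hnoti : ∀ C : Finset ι, i ∉ C → ah C = a C)
    (hopt : ∀ C : Finset ι, C ⊂ Finset.univ → i ∈ C → ah C ≤ a C) :
    (∑ C : Finset ι, γ i C * ah C ≤ ∑ C : Finset ι, γ i C * a C) ∧
    (∑ C : Finset ι, (∑ i' ∈ Finset.univ.erase i, γ i' C) * a C
      ≤ ∑ C : Finset ι, (∑ i' ∈ Finset.univ.erase i, γ i' C) * ah C) := by
  have key : ∀ C : Finset ι, γ i C * ah C ≤ γ i C * a C ∧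
      (∑ i' ∈ Finset.univ.erase i, γ i' C) * a C ≤ (∑ i' ∈ Finset.univ.erase i, γ i' C) * ah C := by
    intro C
    rcases eq_or_ne C Finset.univ with h | h
    · subst h; simp [hfull]
    · have hC : C ⊂ Finset.univ := lt_of_le_of_ne (Finset.subset_univ C) h
      by_cases hi : i ∈ C
      · have h1 := hpos i C hC hi
        have h2 := hopt C hC hi
        have h3 : ∑ i' ∈ Finset.univ.erase i, γ i' C = -γ i C := by
          have hs := hsum C hC
          have he := Finset.add_sum_erase Finset.univ (fun i' => γ i' C) (Finset.mem_univ i)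
          linarith
        refine ⟨mul_le_mul_of_nonneg_left h2 h1, ?_⟩
        rw [h3]; nlinarith
      · rw [hnoti C hi]; exact ⟨le_refl _, le_refl _⟩
  exact ⟨Finset.sum_le_sum (fun C _ => (key C).1), Finset.sum_le_sum (fun C _ => (key C).2)⟩
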